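/- Let λ ∈ ℂ, λ ≠ 0, let p ≥ 2, and let v ∈ ℂ be a prepole of f_λ of order p−1 with v ≠ iλ and v ≠ −iλ. Then there exists a sequence (z_k) in ℂ such that: each z_k is a periodic point of f_λ of period p whose orbit is pole-free up to time p (f_λ^[p](z_k) = z_k); z_k → v as k → ∞; and the multipliers satisfy |deriv(f_λ^[p])(z_k)| → ∞ as k → ∞. -/

import Mathlib

open Complex Filter

/-- The tangent family: `f_λ(z) = λ · tan z`, with Mathlib's total complex tangent. -/
noncomputable def ftan (lam : ℂ) : ℂ → ℂ := fun z => lam * Complex.tan z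

/-- `z` is a prepole of `f_λ` of order `p` (for `p ≥ 1`): `cos (f_λ^[p−1] z) = 0`
and `cos (f_λ^[j] z) ≠ 0` for all `0 ≤ j < p−1`. -/
def IsPrepole (lam : ℂ) (p : ℕ) (z : ℂ) : Prop :=
  Complex.cos ((ftan lam)^[p - 1] z) = 0 ∧
  ∀ j < p - 1, Complex.cos ((ftan lam)^[j] z) ≠ 0

/-- The orbit of `z` under `f_λ` is pole-free up to time `q`. -/
def PoleFree (lam : ℂ) (q : ℕ) (z : ℂ) : Prop :=
  ∀ j < q, Complex.cos ((ftan lam)^[j] z) ≠ 0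

lemma ftan_hasDerivAt (lam : ℂ) {y : ℂ} (h : Complex.cos y ≠ 0) :
    HasDerivAt (ftan lam) (lam / Complex.cos y ^ 2) y := by
  have := (Complex.hasDerivAt_tan h).const_mul lam
  exact this.congr_deriv (by ring)

lemma iter_hasDerivAt (lam : ℂ) (n : ℕ) {z : ℂ} (h : PoleFree lam n z) :
    HasDerivAt ((ftan lam)^[n])
      (∏ j ∈ Finset.range n, lam / Complex.cos ((ftan lam)^[j] z) ^ 2) z := by
  induction n with
  | zero => simpa using hasDerivAt_id z
  | succ n ih =>
    have hn : PoleFree lam n z := fun j hj => h j (by omega)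
    have h1 := ftan_hasDerivAt lam (h n (by omega))
    have := HasDerivAt.comp z h1 (ih hn)
    rw [Function.iterate_succ']
    rw [Finset.prod_range_succ]
    simpa [mul_comm] using this

lemma iter_continuousAt (lam : ℂ) (n : ℕ) {z : ℂ} (h : PoleFree lam n z) :
    ContinuousAt ((ftan lam)^[n]) z := (iter_hasDerivAt lam n h).continuousAt

lemma sin_cos_add_nat_pi (t : ℂ) (n : ℕ) :
    Complex.sin (t + n * Real.pi) = (-1)^n * Complex.sin t ∧
    Complex.cos (t + n * Real.pi) = (-1)^n * Complex.cos t := by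
  induction n with
  | zero => simp
  | succ n ih =>
    have ht : (t : ℂ) + (n+1 : ℕ) * Real.pi = (t + n * Real.pi) + Real.pi := by
      push_cast; ring
    have hs : Complex.sin (Real.pi : ℂ) = 0 := by
      rw [← Complex.ofReal_sin]; simp
    have hc : Complex.cos (Real.pi : ℂ) = -1 := by
      rw [← Complex.ofReal_cos]; simp
    constructor
    · rw [ht, Complex.sin_add, ih.1, ih.2, hs, hc]; ring
    · rw [ht, Complex.cos_add, ih.1, ih.2, hs, hc]; ring

lemma tan_add_nat_pi (t : ℂ) (n : ℕ) :
    Complex.tan (t + n * Real.pi) = Complex.tan t := by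
  rw [Complex.tan_eq_sin_div_cos, Complex.tan_eq_sin_div_cos,
    (sin_cos_add_nat_pi t n).1, (sin_cos_add_nat_pi t n).2,
    mul_div_mul_left _ _ (pow_ne_zero _ (by norm_num) : ((-1:ℂ))^n ≠ 0)]

lemma cos_tan_of_exp {t : ℂ} (h : Complex.exp (2 * t * I) ≠ -1) :
    Complex.cos t ≠ 0 ∧
    Complex.tan t = I * (1 - Complex.exp (2 * t * I)) / (1 + Complex.exp (2 * t * I)) := by
  have hq : Complex.exp (2 * t * I) = (Complex.cos t + Complex.sin t * I)^2 := by
    have : (2:ℂ) * t * I = t * I + t * I := by ring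
    rw [this, Complex.exp_add, Complex.exp_mul_I]; ring
  have hcs : Complex.sin t ^ 2 + Complex.cos t ^ 2 = 1 := Complex.sin_sq_add_cos_sq t
  have hc : Complex.cos t ≠ 0 := by
    intro hc0
    apply h
    rw [hq, hc0]
    have hs2 : Complex.sin t ^ 2 = 1 := by
      have := hcs; rw [hc0] at this; simpa using this
    calc (0 + Complex.sin t * I)^2 = Complex.sin t ^2 * I^2 := by ring
    _ = -1 := by rw [hs2, Complex.I_sq]; ring
  have hne : (1:ℂ) + Complex.exp (2*t*I) ≠ 0 := by
    intro h0
    apply h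
    linear_combination h0
  refine ⟨hc, ?_⟩
  rw [Complex.tan_eq_sin_div_cos, div_eq_div_iff hc hne, hq]
  linear_combination (Complex.I * Complex.cos t - Complex.sin t) * hcs +
    (Complex.sin t ^ 3 + 2 * Complex.cos t ^ 2 * Complex.sin t +
      Complex.cos t * Complex.sin t ^ 2 * Complex.I) * Complex.I_sq

lemma derivContinuousOn {f : ℂ → ℂ} {s : Set ℂ} (hs : IsOpen s)
    (h : DifferentiableOn ℂ f s) : ContinuousOn (deriv f) s :=
  ((h.analyticOnNhd hs).deriv).continuousOn

/-- Möbius map used to build a branch of `arctan (z/λ)`. -/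
noncomputable def wzaux (lam : ℂ) : ℂ → ℂ := fun z => (1 + I*z/lam)/(1 - I*z/lam)

lemma wzaux_facts {lam z : ℂ} (hlam : lam ≠ 0) (hz : lam^2 + z^2 ≠ 0) :
    (1 + I*z/lam ≠ 0) ∧ (1 - I*z/lam ≠ 0) ∧ wzaux lam z ≠ 0 ∧ wzaux lam z ≠ -1 := by
  have h1 : 1 + I*z/lam ≠ 0 := by
    intro h0
    apply hz
    have hl : lam + I*z = 0 := by
      field_simp at h0
      linear_combination h0
    linear_combination (lam - I*z)*hl + z^2*Complex.I_sq
  have h2 : 1 - I*z/lam ≠ 0 := by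
    intro h0
    apply hz
    have hl : lam - I*z = 0 := by
      field_simp at h0
      linear_combination h0
    linear_combination (lam + I*z)*hl + z^2*Complex.I_sq
  refine ⟨h1, h2, div_ne_zero h1 h2, ?_⟩
  intro h0
  have h0' : 1 + I*z/lam = -1 * (1 - I*z/lam) := (div_eq_iff h2).1 h0
  have : (2:ℂ) = 0 := by linear_combination h0'
  norm_num at this

/-- A branch of `arctan (z/λ)` holomorphic near a prescribed point. -/
noncomputable def alphaAux (lam c₀ : ℂ) : ℂ → ℂ :=
  fun z => -(I/2) * (Complex.log (c₀ * wzaux lam z) - Complex.log c₀)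

lemma alphaAux_spec {lam c₀ z : ℂ} (hlam : lam ≠ 0) (hz : lam^2 + z^2 ≠ 0) (hc₀ : c₀ ≠ 0) :
    Complex.cos (alphaAux lam c₀ z) ≠ 0 ∧ Complex.tan (alphaAux lam c₀ z) = z / lam := by
  obtain ⟨h1, h2, hw0, hwm1⟩ := wzaux_facts hlam hz
  have hcw0 : c₀ * wzaux lam z ≠ 0 := mul_ne_zero hc₀ hw0
  have hexp : Complex.exp (2 * alphaAux lam c₀ z * I) = wzaux lam z := by
    have he : 2 * alphaAux lam c₀ z * I
        = Complex.log (c₀ * wzaux lam z) - Complex.log c₀ := by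
      show 2 * (-(I/2) * (Complex.log (c₀ * wzaux lam z) - Complex.log c₀)) * I = _
      linear_combination (Complex.log c₀ - Complex.log (c₀ * wzaux lam z)) * Complex.I_sq
    rw [he, Complex.exp_sub, Complex.exp_log hcw0, Complex.exp_log hc₀,
      mul_comm c₀ (wzaux lam z), mul_div_assoc, div_self hc₀, mul_one]
  have hnem1 : Complex.exp (2 * alphaAux lam c₀ z * I) ≠ -1 := by rw [hexp]; exact hwm1
  obtain ⟨hc, ht⟩ := cos_tan_of_exp hnem1
  refine ⟨hc, ?_⟩
  rw [ht, hexp]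
  have h1w : 1 + wzaux lam z ≠ 0 := fun h0 => hwm1 (by linear_combination h0)
  rw [div_eq_div_iff h1w hlam]
  have h2' : lam - I*z ≠ 0 := by
    intro h0
    apply h2
    field_simp
    linear_combination h0
  show I * (1 - (1 + I*z/lam)/(1 - I*z/lam)) * lam = z * (1 + (1 + I*z/lam)/(1 - I*z/lam))
  field_simp
  linear_combination (-2*z*lam) * Complex.I_sq

set_option maxHeartbeats 1000000 in
theorem repelling_points_accumulate_at_prepole (lam : ℂ) (hlam : lam ≠ 0)
    (p : ℕ) (hp : 2 ≤ p) (v : ℂ) (hv : IsPrepole lam (p - 1) v)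
    (h1 : v ≠ Complex.I * lam) (h2 : v ≠ -(Complex.I * lam)) :
    ∃ z : ℕ → ℂ,
      (∀ k, PoleFree lam p (z k) ∧ (ftan lam)^[p] (z k) = z k) ∧
      Filter.Tendsto z Filter.atTop (nhds v) ∧
      Filter.Tendsto (fun k => ‖deriv ((ftan lam)^[p]) (z k)‖)
        Filter.atTop Filter.atTop := by
  obtain ⟨m, rfl⟩ : ∃ m, p = m + 2 := ⟨p - 2, by omega⟩
  have hv1 : Complex.cos ((ftan lam)^[m] v) = 0 := by
    have h := hv.1
    have hidx : m + 2 - 1 - 1 = m := by omega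
    rwa [hidx] at h
  have hv2 : PoleFree lam m v := fun j hj => hv.2 j (by omega)
  have hsinw : Complex.sin ((ftan lam)^[m] v) ≠ 0 := by
    intro h0
    have := Complex.sin_sq_add_cos_sq ((ftan lam)^[m] v)
    rw [h0, hv1] at this
    norm_num at this
  -- derivative of the `m`-th iterate at `v`
  set Dg : ℂ := ∏ j ∈ Finset.range m, lam / Complex.cos ((ftan lam)^[j] v) ^ 2 with hDgdef
  have hDg : HasDerivAt ((ftan lam)^[m]) Dg v := iter_hasDerivAt lam m hv2
  have hDgne : Dg ≠ 0 := by
    rw [hDgdef]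
    exact Finset.prod_ne_zero_iff.2 fun j hj =>
      div_ne_zero hlam (pow_ne_zero _ (hv2 j (Finset.mem_range.1 hj)))
  -- the reciprocal-of-`f^[m+1]` map `G`
  set G : ℂ → ℂ :=
    fun z => Complex.cos ((ftan lam)^[m] z) / (lam * Complex.sin ((ftan lam)^[m] z)) with hGdef
  have hGv : G v = 0 := by simp [hGdef, hv1]
  set d : ℂ := -(Dg/lam) with hddef
  have hdne : d ≠ 0 := by
    rw [hddef]
    exact neg_ne_zero.2 (div_ne_zero hDgne hlam)
  have hdpos : (0:ℝ) < ‖d‖ := norm_pos_iff.2 hdne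
  have hGd : HasDerivAt G d v := by
    have hN : HasDerivAt (fun z => Complex.cos ((ftan lam)^[m] z))
        (-Complex.sin ((ftan lam)^[m] v) * Dg) v :=
      HasDerivAt.comp v (Complex.hasDerivAt_cos _) hDg
    have hDen : HasDerivAt (fun z => lam * Complex.sin ((ftan lam)^[m] z))
        (lam * (Complex.cos ((ftan lam)^[m] v) * Dg)) v := by
      have := HasDerivAt.comp v (Complex.hasDerivAt_sin ((ftan lam)^[m] v)) hDg
      exact this.const_mul lam
    have hden_ne : lam * Complex.sin ((ftan lam)^[m] v) ≠ 0 := mul_ne_zero hlam hsinw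
    have hGder0 := hN.div hDen hden_ne
    refine hGder0.congr_deriv ?_
    rw [hv1, hddef]
    field_simp
    ring
  have hvd : lam^2 + v^2 ≠ 0 := by
    intro h0
    have hfac : (v - I*lam) * (v + I*lam) = 0 := by
      linear_combination h0 - lam^2 * Complex.I_sq
    rcases mul_eq_zero.1 hfac with h | h
    · exact h1 (by linear_combination h)
    · exact h2 (by linear_combination h)
  -- the constant `c₀` fixing the branch of arctan
  set c₀ : ℂ := (‖wzaux lam v‖ : ℂ) / wzaux lam v with hc₀def
  have hw0v : wzaux lam v ≠ 0 := (wzaux_facts hlam hvd).2.2.1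
  have hc₀ : c₀ ≠ 0 := by
    rw [hc₀def]
    exact div_ne_zero (Complex.ofReal_ne_zero.2 (norm_ne_zero_iff.2 hw0v)) hw0v
  have hslitv : c₀ * wzaux lam v ∈ Complex.slitPlane := by
    rw [hc₀def, div_mul_cancel₀ _ hw0v]
    exact Complex.ofReal_mem_slitPlane.2 (norm_pos_iff.mpr hw0v)
  set α : ℂ → ℂ := alphaAux lam c₀ with hαdef
  -- the good open set `U`
  set U : Set ℂ := {z | (∀ j < m, Complex.cos ((ftan lam)^[j] z) ≠ 0) ∧
      Complex.sin ((ftan lam)^[m] z) ≠ 0 ∧ lam^2 + z^2 ≠ 0 ∧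
      c₀ * wzaux lam z ∈ Complex.slitPlane} with hUdef
  have hUopen : IsOpen U := by
    rw [isOpen_iff_mem_nhds]
    rintro z₀ ⟨ha, hb, hc, hd'⟩
    have e1 : ∀ᶠ z in nhds z₀, ∀ j ∈ Finset.range m, Complex.cos ((ftan lam)^[j] z) ≠ 0 :=
      Filter.eventually_all_finset _ |>.2 fun j hj =>
        (Complex.continuous_cos.continuousAt.comp
          (iter_continuousAt lam j (fun i hi => ha i (by
            have := Finset.mem_range.1 hj; omega)))).eventually_ne
          (ha j (Finset.mem_range.1 hj))
    have e2 : ∀ᶠ z in nhds z₀, Complex.sin ((ftan lam)^[m] z) ≠ 0 :=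
      (Complex.continuous_sin.continuousAt.comp (iter_continuousAt lam m ha)).eventually_ne hb
    have e3 : ∀ᶠ z in nhds z₀, lam^2 + z^2 ≠ 0 := by
      have : ContinuousAt (fun z : ℂ => lam^2 + z^2) z₀ := by fun_prop
      exact this.eventually_ne hc
    have e4 : ∀ᶠ z in nhds z₀, c₀ * wzaux lam z ∈ Complex.slitPlane := by
      have hwcont : ContinuousAt (fun z => c₀ * wzaux lam z) z₀ := by
        apply continuousAt_const.mul
        have : ContinuousAt (fun z : ℂ => (1 + I*z/lam)/(1 - I*z/lam)) z₀ :=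
          ContinuousAt.div (by fun_prop) (by fun_prop) ((wzaux_facts hlam hc).2.1)
        exact this
      exact hwcont.eventually_mem (Complex.isOpen_slitPlane.mem_nhds hd')
    filter_upwards [e1, e2, e3, e4] with z h1z h2z h3z h4z
    exact ⟨fun j hj => h1z j (Finset.mem_range.2 hj), h2z, h3z, h4z⟩
  have hvU : v ∈ U := ⟨fun j hj => hv2 j hj, hsinw, hvd, hslitv⟩
  have hGdiff : DifferentiableOn ℂ G U := by
    rintro z ⟨ha, hb, -, -⟩
    have hgd : DifferentiableAt ℂ (ftan lam)^[m] z := (iter_hasDerivAt lam m ha).differentiableAt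
    exact ((Complex.differentiable_cos.differentiableAt.comp z hgd).div
      ((Complex.differentiable_sin.differentiableAt.comp z hgd).const_mul lam)
      (mul_ne_zero hlam hb)).differentiableWithinAt
  have hαdiffU : DifferentiableOn ℂ α U := by
    rintro z ⟨-, -, hc, hd'⟩
    have h2' := (wzaux_facts hlam hc).2.1
    have hwd : DifferentiableAt ℂ (wzaux lam) z := by
      unfold wzaux
      exact DifferentiableAt.div (by fun_prop) (by fun_prop) h2'
    have hld : DifferentiableAt ℂ (fun z => Complex.log (c₀ * wzaux lam z)) z :=
      by have := (Complex.differentiableAt_log hd').comp z (hwd.const_mul c₀); exact this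
    exact (((hld.sub_const _).const_mul _)).differentiableWithinAt
  -- choose the radius `r`
  have hGdC : ContinuousAt (deriv G) v :=
    (derivContinuousOn hUopen hGdiff).continuousAt (hUopen.mem_nhds hvU)
  have hderivGv : deriv G v = d := hGd.deriv
  have hev4 : ∀ᶠ z in nhds v, ‖deriv G z - d‖ ≤ ‖d‖/4 := by
    have hT : Filter.Tendsto (deriv G) (nhds v) (nhds d) := by
      rw [← hderivGv]; exact hGdC
    have hball : Metric.closedBall d (‖d‖/4) ∈ nhds d :=
      Metric.closedBall_mem_nhds d (by positivity)
    filter_upwards [hT hball] with z hz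
    simpa [Metric.mem_closedBall, dist_eq_norm] using hz
  obtain ⟨ε, hε, hball⟩ := Metric.eventually_nhds_iff_ball.1
    ((hUopen.eventually_mem hvU).and hev4)
  set r : ℝ := ε/2 with hrdef
  have hr : 0 < r := by positivity
  set B : Set ℂ := Metric.closedBall v r with hBdef
  have hBsub : ∀ z ∈ B, z ∈ U ∧ ‖deriv G z - d‖ ≤ ‖d‖/4 := by
    intro z hz
    apply hball
    rw [Metric.mem_ball]
    have := Metric.mem_closedBall.1 hz
    rw [hrdef] at this
    linarith
  have hvB : v ∈ B := Metric.mem_closedBall_self hr.le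
  -- bounds on the ball
  have hαcont : ContinuousOn α B :=
    (hαdiffU.continuousOn).mono fun z hz => (hBsub z hz).1
  obtain ⟨A, hA⟩ := (isCompact_closedBall v r).exists_bound_of_continuousOn hαcont
  have hA0 : 0 ≤ A := le_trans (norm_nonneg _) (hA v hvB)
  obtain ⟨Ma, hMa⟩ := (isCompact_closedBall v r).exists_bound_of_continuousOn
    ((derivContinuousOn hUopen hαdiffU).mono fun z hz => (hBsub z hz).1)
  have hLlb : ∀ (k:ℕ), ∀ z ∈ B, (k:ℝ)*Real.pi - A ≤ ‖α z + (k:ℂ)*(Real.pi:ℂ)‖ := by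
    intro k z hz
    have h1n : ‖((k:ℂ)*(Real.pi:ℂ))‖ = (k:ℝ)*Real.pi := by
      rw [norm_mul]
      simp [Complex.norm_natCast, Complex.norm_real, Real.norm_eq_abs,
        _root_.abs_of_nonneg Real.pi_pos.le]
    have htri : ‖((k:ℂ)*(Real.pi:ℂ))‖ ≤ ‖α z + (k:ℂ)*(Real.pi:ℂ)‖ + ‖α z‖ := by
      calc ‖((k:ℂ)*(Real.pi:ℂ))‖ = ‖(α z + (k:ℂ)*(Real.pi:ℂ)) - α z‖ := by ring_nf
      _ ≤ _ := norm_sub_le _ _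
    have := hA z hz
    rw [h1n] at htri
    linarith
  -- the mean value estimate for `G`
  have hmvt : ∀ x ∈ B, ‖(G x - d*x) - (G v - d*v)‖ ≤ ‖d‖/4 * ‖x - v‖ := by
    intro x hx
    exact Convex.norm_image_sub_le_of_norm_hasDerivWithin_le
      (f := fun z => G z - d*z) (f' := fun z => deriv G z - d)
      (fun z hz => by
        exact HasDerivWithinAt.congr_deriv (((hGdiff.differentiableAt
          (hUopen.mem_nhds (hBsub z hz).1)).hasDerivAt).sub
          ((hasDerivAt_id z).const_mul d)).hasDerivWithinAt (by ring))
      (fun z hz => (hBsub z hz).2) (convex_closedBall v r) hvB hx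
  -- existence of periodic points: the Banach fixed point argument
  have exk : ∀ k : ℕ, 1 ≤ (k:ℝ)*Real.pi - A → Ma ≤ ‖d‖/4*((k:ℝ)*Real.pi - A)^2 →
      2 ≤ r*‖d‖*((k:ℝ)*Real.pi - A) →
      ∃ y ∈ B, G y = (α y + (k:ℂ)*(Real.pi:ℂ))⁻¹ := by
    intro k hk1 hk2 hk3
    set κ : ℝ := (k:ℝ)*Real.pi - A with hκdef
    set L : ℂ → ℂ := fun z => α z + (k:ℂ)*(Real.pi:ℂ) with hLdef
    have hκpos : 0 < κ := by linarith
    have hLlb' : ∀ z ∈ B, κ ≤ ‖L z‖ := hLlb k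
    have hLne : ∀ z ∈ B, L z ≠ 0 := by
      intro z hz h0
      have := hLlb' z hz
      rw [h0, norm_zero] at this
      linarith
    set N : ℂ → ℂ := fun z => z - (G z - (L z)⁻¹)/d with hNdef
    have hder : ∀ z ∈ B, HasDerivAt N (1 - (deriv G z + deriv α z/(L z)^2)/d) z := by
      intro z hz
      have hzU := (hBsub z hz).1
      have hG' : HasDerivAt G (deriv G z) z :=
        (hGdiff.differentiableAt (hUopen.mem_nhds hzU)).hasDerivAt
      have hα' : HasDerivAt α (deriv α z) z :=
        (hαdiffU.differentiableAt (hUopen.mem_nhds hzU)).hasDerivAt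
      have hL' : HasDerivAt L (deriv α z) z := hα'.add_const _
      have hinv : HasDerivAt (fun z => (L z)⁻¹) (-(deriv α z)/(L z)^2) z :=
        hL'.inv (hLne z hz)
      have := (hasDerivAt_id z).sub (((hG'.sub hinv)).div_const d)
      exact this.congr_deriv (by ring)
    have hdbound : ∀ z ∈ B, ‖1 - (deriv G z + deriv α z/(L z)^2)/d‖ ≤ 1/2 := by
      intro z hz
      have hb1 : ‖1 - deriv G z/d‖ ≤ 1/4 := by
        have hrw : 1 - deriv G z/d = (d - deriv G z)/d := by field_simp
        rw [hrw, norm_div, div_le_iff₀ hdpos]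
        calc ‖d - deriv G z‖ = ‖deriv G z - d‖ := norm_sub_rev _ _
        _ ≤ ‖d‖/4 := (hBsub z hz).2
        _ = 1/4*‖d‖ := by ring
      have hb2 : ‖deriv α z/(L z)^2/d‖ ≤ 1/4 := by
        rw [norm_div, norm_div, norm_pow, div_le_iff₀ hdpos,
          div_le_iff₀ (by nlinarith [hLlb' z hz] : (0:ℝ) < ‖L z‖^2)]
        have hL2 : κ^2 ≤ ‖L z‖^2 := pow_le_pow_left₀ hκpos.le (hLlb' z hz) 2
        have hMaz := hMa z hz
        have hmul := mul_le_mul_of_nonneg_left hL2 (show (0:ℝ) ≤ ‖d‖/4 by positivity)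
        linarith
      calc ‖1 - (deriv G z + deriv α z/(L z)^2)/d‖
          = ‖(1 - deriv G z/d) - deriv α z/(L z)^2/d‖ := by ring_nf
      _ ≤ ‖1 - deriv G z/d‖ + ‖deriv α z/(L z)^2/d‖ := norm_sub_le _ _
      _ ≤ 1/2 := by linarith
    have hlip' : ∀ x ∈ B, ∀ y ∈ B, ‖N y - N x‖ ≤ 1/2*‖y - x‖ := fun x hx y hy =>
      Convex.norm_image_sub_le_of_norm_hasDerivWithin_le
        (fun z hz => (hder z hz).hasDerivWithinAt) hdbound (convex_closedBall v r) hx hy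
    have hmaps : Set.MapsTo N B B := by
      intro z hz
      have hz1 : ‖N z - N v‖ ≤ 1/2*‖z - v‖ := hlip' v hvB z hz
      have hz2 : ‖N v - v‖ ≤ r/2 := by
        have hNv' : N v - v = (L v)⁻¹/d := by
          rw [hNdef]; simp [hGv]; ring
        rw [hNv', norm_div, norm_inv]
        have hLv : κ ≤ ‖L v‖ := hLlb' v hvB
        have hinv1 : ‖L v‖⁻¹ ≤ κ⁻¹ := inv_anti₀ hκpos hLv
        have hκinv : κ * κ⁻¹ = 1 := mul_inv_cancel₀ hκpos.ne'
        rw [div_le_iff₀ hdpos]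
        calc ‖L v‖⁻¹ ≤ κ⁻¹ := hinv1
        _ ≤ r/2*‖d‖ := by nlinarith [inv_nonneg.2 hκpos.le]
      have hzr : ‖z - v‖ ≤ r := by
        have := Metric.mem_closedBall.1 hz
        rwa [dist_eq_norm] at this
      rw [hBdef, Metric.mem_closedBall, dist_eq_norm]
      calc ‖N z - v‖ ≤ ‖N z - N v‖ + ‖N v - v‖ := by
            have := norm_add_le (N z - N v) (N v - v)
            simpa using this
      _ ≤ 1/2*r + r/2 := by linarith
      _ = r := by ring
    have hcomplete : IsComplete B := Metric.isClosed_closedBall.isComplete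
    have hcontr : ContractingWith (1/2 : NNReal) (hmaps.restrict N B B) := by
      constructor
      · exact one_half_lt_one
      · apply LipschitzWith.of_dist_le_mul
        rintro ⟨x, hx⟩ ⟨y, hy⟩
        have : dist (N x) (N y) ≤ 1/2 * dist x y := by
          rw [dist_eq_norm, dist_eq_norm]
          exact hlip' y hy x hx
        simpa [Subtype.dist_eq] using this
    obtain ⟨y, hyB, hfix, -, -⟩ := ContractingWith.exists_fixedPoint' hcomplete hmaps hcontr
      hvB (edist_ne_top _ _)
    refine ⟨y, hyB, ?_⟩
    have hfix' : (G y - (L y)⁻¹)/d = 0 := by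
      have : N y = y := hfix
      rw [hNdef] at this
      simpa using sub_eq_self.1 this
    have := (div_eq_zero_iff.1 hfix').resolve_right hdne
    exact sub_eq_zero.1 this
  -- eventual validity of the numeric side conditions
  have hκT : Filter.Tendsto (fun k:ℕ => (k:ℝ)*Real.pi - A) atTop atTop := by
    have h1' : Filter.Tendsto (fun k:ℕ => (k:ℝ)*Real.pi) atTop atTop :=
      tendsto_natCast_atTop_atTop.atTop_mul_const Real.pi_pos
    simpa [sub_eq_add_neg] using tendsto_atTop_add_const_right atTop (-A) h1'
  have hev1 : ∀ᶠ k:ℕ in atTop, 1 ≤ (k:ℝ)*Real.pi - A := hκT.eventually_ge_atTop 1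
  have hev2 : ∀ᶠ k:ℕ in atTop, Ma ≤ ‖d‖/4*((k:ℝ)*Real.pi - A)^2 := by
    have hsq : Filter.Tendsto (fun k:ℕ => ‖d‖/4*((k:ℝ)*Real.pi - A)^2) atTop atTop := by
      have := (hκT.atTop_mul_atTop₀ hκT).const_mul_atTop
        (show (0:ℝ) < ‖d‖/4 by positivity)
      refine this.congr fun k => ?_
      ring
    exact hsq.eventually_ge_atTop Ma
  have hev3 : ∀ᶠ k:ℕ in atTop, 2 ≤ r*‖d‖*((k:ℝ)*Real.pi - A) := by
    have := hκT.const_mul_atTop (show (0:ℝ) < r*‖d‖ by positivity)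
    exact (this.congr fun k => by ring).eventually_ge_atTop 2
  obtain ⟨K₀, hK₀⟩ := Filter.eventually_atTop.1 ((hev1.and hev2).and hev3)
  -- construct the sequence
  have hZex : ∀ k:ℕ, ∃ y ∈ B, G y = (α y + ((k+K₀:ℕ):ℂ)*(Real.pi:ℂ))⁻¹ := by
    intro k
    have h := hK₀ (k+K₀) (Nat.le_add_left K₀ k)
    exact exk (k+K₀) h.1.1 h.1.2 h.2
  choose Z hZB hZeq using hZex
  have hκ'pos : ∀ k:ℕ, (1:ℝ) ≤ ((k+K₀:ℕ):ℝ)*Real.pi - A :=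
    fun k => (hK₀ (k+K₀) (Nat.le_add_left K₀ k)).1.1
  have hLk_ne : ∀ k, α (Z k) + ((k+K₀:ℕ):ℂ)*(Real.pi:ℂ) ≠ 0 := by
    intro k h0
    have := hLlb (k+K₀) (Z k) (hZB k)
    rw [h0, norm_zero] at this
    have := hκ'pos k
    linarith
  have hG_ne : ∀ k, G (Z k) ≠ 0 := by
    intro k
    rw [hZeq k]
    exact inv_ne_zero (hLk_ne k)
  have hZU : ∀ k, Z k ∈ U := fun k => (hBsub _ (hZB k)).1
  have hcosg : ∀ k, Complex.cos ((ftan lam)^[m] (Z k)) ≠ 0 := by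
    intro k h0
    exact hG_ne k (by rw [hGdef]; simp [h0])
  have hαk : ∀ k, Complex.cos (α (Z k)) ≠ 0 ∧ Complex.tan (α (Z k)) = Z k / lam :=
    fun k => alphaAux_spec hlam (hZU k).2.2.1 hc₀
  have hfm1 : ∀ k, (ftan lam)^[m+1] (Z k) = α (Z k) + ((k+K₀:ℕ):ℂ)*(Real.pi:ℂ) := by
    intro k
    rw [Function.iterate_succ_apply']
    show lam * Complex.tan ((ftan lam)^[m] (Z k)) = _
    rw [← inv_inv (α (Z k) + ((k+K₀:ℕ):ℂ)*(Real.pi:ℂ)), ← hZeq k, hGdef]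
    rw [Complex.tan_eq_sin_div_cos, inv_div]
    ring
  have hcosL : ∀ k, Complex.cos (α (Z k) + ((k+K₀:ℕ):ℂ)*(Real.pi:ℂ))
      = (-1)^(k+K₀) * Complex.cos (α (Z k)) := fun k => (sin_cos_add_nat_pi _ _).2
  have hZpfull : ∀ k, PoleFree lam (m+2) (Z k) := by
    intro k j hj
    rcases (by omega : j < m ∨ j = m ∨ j = m+1) with h | h | h
    · exact (hZU k).1 j h
    · rw [h]; exact hcosg k
    · rw [h, hfm1 k, hcosL k]
      exact mul_ne_zero (pow_ne_zero _ (by norm_num)) (hαk k).1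
  have hperiod : ∀ k, (ftan lam)^[m+2] (Z k) = Z k := by
    intro k
    rw [show m+2 = (m+1)+1 from rfl, Function.iterate_succ_apply', hfm1 k]
    show lam * Complex.tan _ = _
    rw [tan_add_nat_pi, (hαk k).2]
    field_simp
  -- convergence to `v`
  have hGb : ∀ k, ‖G (Z k)‖ ≤ (((k+K₀:ℕ):ℝ)*Real.pi - A)⁻¹ := by
    intro k
    rw [hZeq k, norm_inv]
    exact inv_anti₀ (by linarith [hκ'pos k]) (hLlb (k+K₀) (Z k) (hZB k))
  have hdist : ∀ k, ‖Z k - v‖ ≤ (4/(3*‖d‖)) * (((k+K₀:ℕ):ℝ)*Real.pi - A)⁻¹ := by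
    intro k
    have hm := hmvt (Z k) (hZB k)
    rw [hGv] at hm
    have hm' : ‖G (Z k) - d*(Z k - v)‖ ≤ ‖d‖/4 * ‖Z k - v‖ := by
      calc ‖G (Z k) - d*(Z k - v)‖ = ‖(G (Z k) - d*(Z k)) - (0 - d*v)‖ := by
            rw [show G (Z k) - d*(Z k - v) = (G (Z k) - d*(Z k)) - (0 - d*v) from by ring]
      _ ≤ ‖d‖/4 * ‖Z k - v‖ := hm
    have htri : ‖d*(Z k - v)‖ - ‖G (Z k)‖ ≤ ‖G (Z k) - d*(Z k - v)‖ := by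
      calc ‖d*(Z k - v)‖ - ‖G (Z k)‖ ≤ ‖d*(Z k - v) - G (Z k)‖ := norm_sub_norm_le _ _
      _ = ‖G (Z k) - d*(Z k - v)‖ := norm_sub_rev _ _
    rw [norm_mul] at htri
    have hGk := hGb k
    have h34 : 3/4*‖d‖*‖Z k - v‖ ≤ (((k+K₀:ℕ):ℝ)*Real.pi - A)⁻¹ := by linarith
    have hκinv : (0:ℝ) < ((k+K₀:ℕ):ℝ)*Real.pi - A := by linarith [hκ'pos k]
    have hdd : ‖d‖ ≠ 0 := hdpos.ne'
    have hmul := mul_le_mul_of_nonneg_left h34 (show (0:ℝ) ≤ 4/(3*‖d‖) by positivity)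
    have hD : ‖d‖ ≠ 0 := by exact hdd
    calc ‖Z k - v‖ = 4/(3*‖d‖)*(3/4*‖d‖*‖Z k - v‖) := by field_simp [hD]
    _ ≤ 4/(3*‖d‖) * (((k+K₀:ℕ):ℝ)*Real.pi - A)⁻¹ := hmul
  have hκ'T : Filter.Tendsto (fun k:ℕ => ((k+K₀:ℕ):ℝ)*Real.pi - A) atTop atTop :=
    hκT.comp (tendsto_add_atTop_nat K₀)
  have hinv0 : Filter.Tendsto (fun k:ℕ => (((k+K₀:ℕ):ℝ)*Real.pi - A)⁻¹) atTop (nhds 0) :=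
    hκ'T.inv_tendsto_atTop
  have hZv : Filter.Tendsto Z atTop (nhds v) := by
    rw [tendsto_iff_dist_tendsto_zero]
    refine squeeze_zero (g := fun k => (4/(3*‖d‖)) * (((k+K₀:ℕ):ℝ)*Real.pi - A)⁻¹)
      (fun k => dist_nonneg) (fun k => ?_) ?_
    · rw [dist_eq_norm]; exact hdist k
    · have := hinv0.const_mul (4/(3*‖d‖))
      simpa using this
  -- the multiplier blows up
  have hABS : ∀ k, ‖deriv ((ftan lam)^[m+2]) (Z k)‖ =
      (∏ j ∈ Finset.range m, ‖lam / Complex.cos ((ftan lam)^[j] (Z k))^2‖) *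
      ‖lam / Complex.cos ((ftan lam)^[m] (Z k))^2‖ *
      ‖(Z k)^2/lam + lam‖ := by
    intro k
    rw [(iter_hasDerivAt lam (m+2) (hZpfull k)).deriv, norm_prod,
      Finset.prod_range_succ, Finset.prod_range_succ]
    congr 1
    have hcα := (hαk k).1
    have ht := (hαk k).2
    rw [Complex.tan_eq_sin_div_cos] at ht
    have hs' : Complex.sin (α (Z k)) * lam = Z k * Complex.cos (α (Z k)) :=
      (div_eq_div_iff hcα hlam).1 ht
    have hsc := Complex.sin_sq_add_cos_sq (α (Z k))
    have hpow1 : ((-1:ℂ)^(k+K₀))^2 = 1 := by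
      rw [← pow_mul, mul_comm, pow_mul, neg_one_sq, one_pow]
    have hfac : lam / Complex.cos ((ftan lam)^[m+1] (Z k))^2 = (Z k)^2/lam + lam := by
      rw [hfm1 k, hcosL k, mul_pow, hpow1, one_mul]
      rw [div_eq_iff (pow_ne_zero 2 hcα), eq_comm]
      field_simp
      linear_combination lam^2 * hsc - (Complex.sin (α (Z k)) * lam + Z k * Complex.cos (α (Z k))) * hs'
    rw [hfac]
  -- limits of the three factors
  have hT1 : Filter.Tendsto
      (fun k => ∏ j ∈ Finset.range m, ‖lam / Complex.cos ((ftan lam)^[j] (Z k))^2‖)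
      atTop (nhds (∏ j ∈ Finset.range m, ‖lam / Complex.cos ((ftan lam)^[j] v)^2‖)) := by
    apply tendsto_finset_prod
    intro j hj
    have hjm := Finset.mem_range.1 hj
    have h1' : Filter.Tendsto (fun k => (ftan lam)^[j] (Z k)) atTop (nhds ((ftan lam)^[j] v)) :=
      ((iter_continuousAt lam j (fun i hi => hv2 i (by omega))).tendsto).comp hZv
    have h2' : Filter.Tendsto (fun k => Complex.cos ((ftan lam)^[j] (Z k))) atTop
        (nhds (Complex.cos ((ftan lam)^[j] v))) :=
      (Complex.continuous_cos.tendsto _).comp h1'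
    have h3' : Filter.Tendsto (fun k => lam / Complex.cos ((ftan lam)^[j] (Z k))^2) atTop
        (nhds (lam / Complex.cos ((ftan lam)^[j] v)^2)) :=
      tendsto_const_nhds.div (h2'.pow 2) (pow_ne_zero 2 (hv2 j hjm))
    exact (continuous_norm.tendsto _).comp h3'
  have hT1pos : 0 < ∏ j ∈ Finset.range m, ‖lam / Complex.cos ((ftan lam)^[j] v)^2‖ :=
    Finset.prod_pos fun j hj =>
      norm_pos_iff.mpr (div_ne_zero hlam (pow_ne_zero _ (hv2 j (Finset.mem_range.1 hj))))
  have hT2 : Filter.Tendsto (fun k => ‖lam / Complex.cos ((ftan lam)^[m] (Z k))^2‖)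
      atTop atTop := by
    have hcid : ∀ k, Complex.cos ((ftan lam)^[m] (Z k))
        = lam * Complex.sin ((ftan lam)^[m] (Z k)) * G (Z k) := by
      intro k
      rw [hGdef]
      rw [mul_div_assoc', mul_div_cancel_left₀ _ (mul_ne_zero hlam (hZU k).2.1)]
    have hb : Filter.Tendsto (fun k => ‖lam * Complex.sin ((ftan lam)^[m] (Z k))‖)
        atTop (nhds (‖lam * Complex.sin ((ftan lam)^[m] v)‖)) := by
      have h1' : Filter.Tendsto (fun k => (ftan lam)^[m] (Z k)) atTop
          (nhds ((ftan lam)^[m] v)) := ((iter_continuousAt lam m hv2).tendsto).comp hZv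
      exact (continuous_norm.tendsto _).comp
        ((tendsto_const_nhds.mul ((Complex.continuous_sin.tendsto _).comp h1')))
    have hG0 : Filter.Tendsto (fun k => ‖G (Z k)‖) atTop (nhds 0) := by
      refine squeeze_zero (fun k => norm_nonneg _) (fun k => ?_) hinv0
      exact hGb k
    have habs0 : Filter.Tendsto (fun k => ‖Complex.cos ((ftan lam)^[m] (Z k))‖)
        atTop (nhds 0) := by
      have hmul := hb.mul hG0
      rw [mul_zero] at hmul
      refine hmul.congr fun k => ?_
      rw [← norm_mul, ← hcid k]
    have hsq0 : Filter.Tendsto (fun k => (‖Complex.cos ((ftan lam)^[m] (Z k))‖)^2)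
        atTop (nhdsWithin 0 (Set.Ioi 0)) := by
      rw [tendsto_nhdsWithin_iff]
      constructor
      · have := habs0.pow 2
        simpa using this
      · exact Filter.Eventually.of_forall fun k => pow_pos (norm_pos_iff.mpr (hcosg k)) 2
    have hinv := hsq0.inv_tendsto_nhdsGT_zero
    have h2' := Filter.Tendsto.const_mul_atTop (norm_pos_iff.mpr hlam) hinv
    refine h2'.congr fun k => ?_
    simp only [Pi.inv_apply]
    rw [norm_div, norm_pow, div_eq_mul_inv]
  have hT3 : Filter.Tendsto (fun k => ‖(Z k)^2/lam + lam‖) atTop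
      (nhds (‖v^2/lam + lam‖)) := by
    have h1' : Filter.Tendsto (fun k => (Z k)^2/lam + lam) atTop (nhds (v^2/lam + lam)) :=
      ((hZv.pow 2).div_const lam).add_const lam
    exact (continuous_norm.tendsto _).comp h1'
  have hc3pos : 0 < ‖v^2/lam + lam‖ := by
    apply norm_pos_iff.mpr
    intro h0
    apply hvd
    field_simp at h0
    linear_combination h0
  have hmult : Filter.Tendsto (fun k => ‖deriv ((ftan lam)^[m+2]) (Z k)‖)
      atTop atTop := by
    have h12 := Filter.Tendsto.pos_mul_atTop hT1pos hT1 hT2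
    have h123 := Filter.Tendsto.atTop_mul_pos hc3pos h12 hT3
    exact h123.congr fun k => (hABS k).symm
  exact ⟨Z, fun k => ⟨hZpfull k, hperiod k⟩, hZv, hmult⟩
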